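/- With the randomized rounding of edge weights to multiples of τ = c·ε²λ/(k log n) (for a sufficiently small constant c), with high probability every vertex set T ⊆ V simultaneously satisfies |w₂(T) − w₁(T)| ≤ ε·w₁(T) + ελ|T|/(2k), where w₁(T) is the original weight of edges entering T and w₂(T) the rounded weight. -/

import Mathlib

open MeasureTheory ProbabilityTheory Finset

lemma exp_quad {x : ℝ} (hx : x ≤ 1) : Real.exp x ≤ 1 + x + x ^ 2 := by
  rcases le_or_gt (|x|) 1 with h | h
  · have := Real.exp_bound h (n := 2) (by norm_num)
    have h2 : |Real.exp x - (1 + x)| ≤ |x| ^ 2 * (3 / 4) := by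
      convert this using 2
      · norm_num [Finset.sum_range_succ]
      · norm_num
    have := abs_le.mp h2
    have hx2 : |x| ^ 2 = x ^ 2 := sq_abs x
    nlinarith [this.2]
  · have hxneg : x < -1 := by
      cases' lt_or_ge x 0 with h0 h0
      · nlinarith [abs_of_neg h0]
      · nlinarith [abs_of_nonneg h0]
    have h1 : Real.exp x < 1 := by
      calc Real.exp x < Real.exp 0 := Real.exp_lt_exp.mpr (by linarith)
        _ = 1 := Real.exp_zero
    nlinarith

lemma two_point_integrable {Ω : Type*} [MeasurableSpace Ω] (μ : Measure Ω)
    [IsProbabilityMeasure μ] {X : Ω → ℝ} (hX : Measurable X) {a b : ℝ}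
    (h : ∀ᵐ ω ∂μ, X ω = a ∨ X ω = b) {f : ℝ → ℝ} (hf : Measurable f) :
    Integrable (fun ω => f (X ω)) μ := by
  refine Integrable.mono' (integrable_const (max |f a| |f b|))
    (hf.comp hX).aestronglyMeasurable ?_
  filter_upwards [h] with ω hω
  rcases hω with hω | hω <;> simp [hω, le_max_left, le_max_right]

lemma mgf_two_point {Ω : Type*} [MeasurableSpace Ω] (μ : Measure Ω) [IsProbabilityMeasure μ]
    {X : Ω → ℝ} (hX : Measurable X) {a τ w t : ℝ} (hτ : 0 < τ) (ha0 : 0 ≤ a)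
    (haw : a ≤ w) (hwa : w ≤ a + τ)
    (h2 : ∀ᵐ ω ∂μ, X ω = a ∨ X ω = a + τ)
    (hmean : ∫ ω, X ω ∂μ = w)
    (ht : |t| * τ ≤ 1) :
    mgf (fun ω => X ω - w) μ t ≤ Real.exp (t ^ 2 * (τ * w)) := by
  have haτ : |t| * |a - w| ≤ 1 := by
    refine le_trans ?_ ht
    have : |a - w| ≤ τ := by rw [abs_le]; constructor <;> linarith
    exact mul_le_mul_of_nonneg_left this (abs_nonneg t)
  have hvτ : |t| * |a + τ - w| ≤ 1 := by
    refine le_trans ?_ ht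
    have : |a + τ - w| ≤ τ := by rw [abs_le]; constructor <;> linarith
    exact mul_le_mul_of_nonneg_left this (abs_nonneg t)
  set u := a - w with hu
  set v := a + τ - w with hv
  set D := t + t ^ 2 * (u + v) with hD
  set C := 1 - t ^ 2 * (u * v) - D * w with hC
  have hXint : Integrable X μ := by
    have := two_point_integrable μ hX h2 (f := id) measurable_id
    simpa using this
  have key : ∀ᵐ ω ∂μ, Real.exp (t * (X ω - w)) ≤ C + D * X ω := by
    filter_upwards [h2] with ω hω
    rcases hω with hω | hω <;> rw [hω]
    · have h1 : t * u ≤ 1 := le_trans (le_trans (le_abs_self _) (abs_mul t u).le) haτ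
      have h2' := exp_quad h1
      have heq : C + D * a = 1 + t * u + (t * u) ^ 2 := by
        rw [hC, hD, hu, hv]; ring
      rw [← hu, heq]; exact h2'
    · have h1 : t * v ≤ 1 := le_trans (le_trans (le_abs_self _) (abs_mul t v).le) hvτ
      have h2' := exp_quad h1
      have heq : C + D * (a + τ) = 1 + t * v + (t * v) ^ 2 := by
        rw [hC, hD, hu, hv]; ring
      rw [← hv, heq]; exact h2'
  have int_exp : Integrable (fun ω => Real.exp (t * (X ω - w))) μ :=
    two_point_integrable μ hX h2
      (Real.measurable_exp.comp ((measurable_id.sub_const w).const_mul t))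
  have int_rhs : Integrable (fun ω => C + D * X ω) μ :=
    (integrable_const C).add (hXint.const_mul D)
  have hint := integral_mono_ae int_exp int_rhs key
  have hrhs : (∫ ω, (C + D * X ω) ∂μ) = C + D * w := by
    rw [integral_add (integrable_const C) (hXint.const_mul D), integral_const,
      integral_const_mul, hmean]
    simp
  have hmgf : mgf (fun ω => X ω - w) μ t = ∫ ω, Real.exp (t * (X ω - w)) ∂μ := rfl
  rw [hmgf]
  have hbound : C + D * w ≤ 1 + t ^ 2 * (τ * w) := by
    have h0w : 0 ≤ w := le_trans ha0 haw
    have : C + D * w = 1 - t ^ 2 * (u * v) := by rw [hC]; ring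
    rw [this]
    have huv : -(u * v) ≤ τ * w := by
      rw [hu, hv]
      nlinarith [sq_nonneg t]
    nlinarith [sq_nonneg t]
  have := Real.add_one_le_exp (t ^ 2 * (τ * w))
  linarith

lemma chernoff_two_sided {E' Ω : Type*} [MeasurableSpace Ω] (μ : Measure Ω)
    [IsProbabilityMeasure μ] (F : Finset E') (Wr : E' → Ω → ℝ) (w : E' → ℝ) (τ t : ℝ)
    (hτ : 0 < τ) (ht0 : 0 ≤ t) (ht : t * τ ≤ 1)
    (hw : ∀ e, 0 ≤ w e) (hmeas : ∀ e, Measurable (Wr e))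
    (hindep : iIndepFun Wr μ)
    (h2 : ∀ e, ∀ᵐ ω ∂μ, Wr e ω = (⌊w e / τ⌋ : ℝ) * τ ∨
      Wr e ω = ((⌊w e / τ⌋ : ℝ) + 1) * τ)
    (hmean : ∀ e, (∫ ω, Wr e ω ∂μ) = w e) (s : ℝ) :
    (μ {ω | s ≤ (∑ e ∈ F, Wr e ω) - ∑ e ∈ F, w e}).toReal
      + (μ {ω | (∑ e ∈ F, Wr e ω) - ∑ e ∈ F, w e ≤ -s}).toReal
      ≤ 2 * Real.exp (-t * s + t ^ 2 * (τ * ∑ e ∈ F, w e)) := by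
  classical
  set X : E' → Ω → ℝ := fun e ω => Wr e ω - w e with hXdef
  have hXmeas : ∀ e, Measurable (X e) := fun e => (hmeas e).sub measurable_const
  have hXindep : iIndepFun X μ :=
    hindep.comp (fun e x => x - w e) (fun e => measurable_id.sub_const _)
  -- per-edge two-point facts
  have ha0 : ∀ e, (0:ℝ) ≤ (⌊w e / τ⌋ : ℝ) * τ := fun e =>
    mul_nonneg (by exact_mod_cast Int.floor_nonneg.mpr (div_nonneg (hw e) hτ.le)) hτ.le
  have haw : ∀ e, (⌊w e / τ⌋ : ℝ) * τ ≤ w e := fun e => by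
    have := Int.floor_le (w e / τ)
    calc (⌊w e / τ⌋ : ℝ) * τ ≤ (w e / τ) * τ := by nlinarith
      _ = w e := by field_simp
  have hwa : ∀ e, w e ≤ (⌊w e / τ⌋ : ℝ) * τ + τ := fun e => by
    have := (Int.lt_floor_add_one (w e / τ)).le
    calc w e = (w e / τ) * τ := by field_simp
      _ ≤ ((⌊w e / τ⌋ : ℝ) + 1) * τ := by nlinarith
      _ = (⌊w e / τ⌋ : ℝ) * τ + τ := by ring
  have h2' : ∀ e, ∀ᵐ ω ∂μ, Wr e ω = (⌊w e / τ⌋ : ℝ) * τ ∨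
      Wr e ω = (⌊w e / τ⌋ : ℝ) * τ + τ := fun e => by
    filter_upwards [h2 e] with ω hω
    rcases hω with h | h
    · exact Or.inl h
    · exact Or.inr (by rw [h]; ring)
  have hmgf : ∀ (t' : ℝ), |t'| * τ ≤ 1 → ∀ e,
      mgf (X e) μ t' ≤ Real.exp (t' ^ 2 * (τ * w e)) := fun t' ht' e =>
    mgf_two_point μ (hmeas e) hτ (ha0 e) (haw e) (hwa e) (h2' e) (hmean e) ht'
  have hint : ∀ (t' : ℝ), ∀ e ∈ F, Integrable (fun ω => Real.exp (t' * X e ω)) μ :=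
    fun t' e _ => two_point_integrable μ (hmeas e) (h2' e)
      (Real.measurable_exp.comp ((measurable_id.sub_const (w e)).const_mul t'))
  have habs : |t| * τ ≤ 1 := by rwa [abs_of_nonneg ht0]
  have habsneg : |(-t)| * τ ≤ 1 := by rwa [abs_neg, abs_of_nonneg ht0]
  -- mgf of the sum
  have hWnn : (0:ℝ) ≤ ∑ e ∈ F, w e := Finset.sum_nonneg fun e _ => hw e
  have hmgfsum : ∀ (t' : ℝ), |t'| * τ ≤ 1 →
      mgf (∑ e ∈ F, X e) μ t' ≤ Real.exp (t' ^ 2 * (τ * ∑ e ∈ F, w e)) := by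
    intro t' ht'
    rw [hXindep.mgf_sum hXmeas F]
    calc ∏ e ∈ F, mgf (X e) μ t' ≤ ∏ e ∈ F, Real.exp (t' ^ 2 * (τ * w e)) :=
          Finset.prod_le_prod (fun e _ => mgf_nonneg) (fun e _ => hmgf t' ht' e)
      _ = Real.exp (∑ e ∈ F, t' ^ 2 * (τ * w e)) := (Real.exp_sum F _).symm
      _ = Real.exp (t' ^ 2 * (τ * ∑ e ∈ F, w e)) := by
          congr 1; rw [Finset.mul_sum, Finset.mul_sum]
  have hset1 : {ω | s ≤ (∑ e ∈ F, Wr e ω) - ∑ e ∈ F, w e}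
      = {ω | s ≤ (∑ e ∈ F, X e) ω} := by
    ext ω; simp [hXdef, Finset.sum_apply, Finset.sum_sub_distrib]
  have hset2 : {ω | (∑ e ∈ F, Wr e ω) - ∑ e ∈ F, w e ≤ -s}
      = {ω | (∑ e ∈ F, X e) ω ≤ -s} := by
    ext ω; simp [hXdef, Finset.sum_apply, Finset.sum_sub_distrib]
  have hup := measure_ge_le_exp_mul_mgf (μ := μ) (X := ∑ e ∈ F, X e) s ht0
    (hXindep.integrable_exp_mul_sum hXmeas (hint t))
  have hlo := measure_le_le_exp_mul_mgf (μ := μ) (X := ∑ e ∈ F, X e) (-s)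
    (neg_nonpos.mpr ht0) (hXindep.integrable_exp_mul_sum hXmeas (hint (-t)))
  rw [hset1, hset2]
  have e1 : (μ {ω | s ≤ (∑ e ∈ F, X e) ω}).toReal
      ≤ Real.exp (-t * s + t ^ 2 * (τ * ∑ e ∈ F, w e)) := by
    calc (μ {ω | s ≤ (∑ e ∈ F, X e) ω}).toReal
        ≤ Real.exp (-t * s) * mgf (∑ e ∈ F, X e) μ t := hup
      _ ≤ Real.exp (-t * s) * Real.exp (t ^ 2 * (τ * ∑ e ∈ F, w e)) := by
          have := hmgfsum t habs
          exact mul_le_mul_of_nonneg_left this (Real.exp_pos _).le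
      _ = Real.exp (-t * s + t ^ 2 * (τ * ∑ e ∈ F, w e)) := (Real.exp_add _ _).symm
  have e2 : (μ {ω | (∑ e ∈ F, X e) ω ≤ -s}).toReal
      ≤ Real.exp (-t * s + t ^ 2 * (τ * ∑ e ∈ F, w e)) := by
    calc (μ {ω | (∑ e ∈ F, X e) ω ≤ -s}).toReal
        ≤ Real.exp (-(-t) * (-s)) * mgf (∑ e ∈ F, X e) μ (-t) := hlo
      _ ≤ Real.exp (-t * s) * Real.exp ((-t) ^ 2 * (τ * ∑ e ∈ F, w e)) := by
          have h := hmgfsum (-t) habsneg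
          have : Real.exp (-(-t) * (-s)) = Real.exp (-t * s) := by ring_nf
          rw [this]
          exact mul_le_mul_of_nonneg_left h (Real.exp_pos _).le
      _ = Real.exp (-t * s + t ^ 2 * (τ * ∑ e ∈ F, w e)) := by
          rw [← Real.exp_add]; ring_nf
  linarith

lemma sum_pow_card {V : Type*} [Fintype V] [DecidableEq V] (x : ℝ) :
    ∑ T : Finset V, x ^ T.card = (x + 1) ^ Fintype.card V := by
  calc ∑ T : Finset V, x ^ T.card
      = ∑ T ∈ (univ : Finset V).powerset, (∏ _i ∈ T, x) * ∏ _i ∈ univ \ T, (1:ℝ) := by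
        rw [Finset.powerset_univ]
        exact Finset.sum_congr rfl fun T _ => by simp [Finset.prod_const]
    _ = ∏ _i : V, (x + 1) := (Finset.prod_add _ _ _).symm
    _ = (x + 1) ^ Fintype.card V := by rw [Finset.prod_const, Finset.card_univ]

theorem stmt12 :
    ∃ c₀ : ℝ, 0 < c₀ ∧
      ∀ {V E' Ω : Type} [Fintype V] [DecidableEq V] [Fintype E'] [MeasurableSpace Ω]
        (μ : Measure Ω) [IsProbabilityMeasure μ]
        (tail head : E' → V) (w : E' → ℝ) (lam k eps τ : ℝ) (Wr : E' → Ω → ℝ),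
        (∀ e, 0 ≤ w e) → 0 < lam → 1 ≤ k → 0 < eps → eps ≤ 1 →
        2 ≤ Fintype.card V →
        τ = c₀ * eps ^ 2 * lam / (k * Real.log (Fintype.card V)) →
        (∀ e, Measurable (Wr e)) →
        iIndepFun Wr μ →
        (∀ e, ∀ᵐ ω ∂μ, Wr e ω = (⌊w e / τ⌋ : ℝ) * τ ∨
          Wr e ω = ((⌊w e / τ⌋ : ℝ) + 1) * τ) →
        (∀ e, (∫ ω, Wr e ω ∂μ) = w e) →
        1 - 1 / (Fintype.card V : ℝ) ≤
          (μ {ω | ∀ T : Finset V,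
            |(∑ e ∈ univ.filter (fun e => tail e ∉ T ∧ head e ∈ T), Wr e ω) -
              (∑ e ∈ univ.filter (fun e => tail e ∉ T ∧ head e ∈ T), w e)| ≤
            eps * (∑ e ∈ univ.filter (fun e => tail e ∉ T ∧ head e ∈ T), w e) +
              eps * lam * T.card / (2 * k)}).toReal := by
  refine ⟨1/100, by norm_num, ?_⟩
  intro V E' Ω _ _ _ _ μ _ tail head w lam k eps τ Wr hw hlam hk heps heps1 hcard hτeq
    hmeas hindep h2 hmean
  -- basic positivity facts
  have hn2 : (2:ℝ) ≤ (Fintype.card V : ℝ) := by exact_mod_cast hcard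
  set N := Fintype.card V with hN
  set n : ℝ := (N : ℝ) with hn
  have hn0 : (0:ℝ) < n := by linarith
  set L := Real.log n with hL
  have hL0 : 0 < L := Real.log_pos (by linarith)
  have hk0 : (0:ℝ) < k := by linarith
  have hτ : 0 < τ := by
    rw [hτeq]
    apply div_pos
    · positivity
    · exact mul_pos hk0 hL0
  have hτne : τ ≠ 0 := hτ.ne'
  -- the key relation
  have key : eps ^ 2 * lam = 100 * (τ * (k * L)) := by
    rw [hτeq]
    field_simp
  -- Chernoff parameter
  set t : ℝ := eps / (2 * τ) with htdef
  have ht0 : 0 ≤ t := by positivity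
  have htτ : t * τ ≤ 1 := by
    rw [htdef, div_mul_eq_mul_div, mul_comm (2:ℝ) τ, ← div_div, mul_div_assoc,
      div_self hτne, mul_one]
    linarith
  -- notation
  set F : Finset V → Finset E' :=
    fun T => univ.filter (fun e => tail e ∉ T ∧ head e ∈ T) with hF
  set W : Finset V → ℝ := fun T => ∑ e ∈ F T, w e with hW
  set sb : Finset V → ℝ := fun T => eps * W T + eps * lam * T.card / (2 * k) with hsb
  set G : Set Ω := {ω | ∀ T : Finset V,
      |(∑ e ∈ F T, Wr e ω) - ∑ e ∈ F T, w e| ≤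
        eps * (∑ e ∈ F T, w e) + eps * lam * T.card / (2 * k)} with hG
  set bad : Finset V → Set Ω := fun T =>
    {ω | ¬ (|(∑ e ∈ F T, Wr e ω) - ∑ e ∈ F T, w e| ≤
        eps * (∑ e ∈ F T, w e) + eps * lam * T.card / (2 * k))} with hbad
  set x : ℝ := Real.exp (-(25 * L)) with hx
  have hx0 : 0 < x := Real.exp_pos _
  -- per-T Chernoff bound
  have hperT : ∀ T : Finset V, (μ (bad T)).toReal ≤ 2 * x ^ T.card := by
    intro T
    have hWeq : (∑ e ∈ F T, w e) = W T := rfl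
    have hWnn : 0 ≤ W T := Finset.sum_nonneg fun e _ => hw e
    have hc0 : (0:ℝ) ≤ (T.card : ℝ) := Nat.cast_nonneg _
    -- exponent bound
    have hsbeq : sb T = eps * W T + eps * lam * T.card / (2 * k) := rfl
    have hexp : -t * sb T + t ^ 2 * (τ * W T) ≤ -(25 * (T.card : ℝ) * L) := by
      have hA : -t * sb T + t ^ 2 * (τ * W T)
          = -(eps ^ 2 * W T / (4 * τ)) - eps ^ 2 * lam * (T.card : ℝ) / (4 * k * τ) := by
        rw [htdef, hsbeq]
        field_simp
        ring
      have hB : eps ^ 2 * lam * (T.card : ℝ) / (4 * k * τ) = 25 * (T.card : ℝ) * L := by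
        rw [key]
        field_simp
        ring
      rw [hA, hB]
      have : 0 ≤ eps ^ 2 * W T / (4 * τ) := by positivity
      linarith
    have hsub : bad T ⊆ {ω | sb T ≤ (∑ e ∈ F T, Wr e ω) - ∑ e ∈ F T, w e}
        ∪ {ω | (∑ e ∈ F T, Wr e ω) - ∑ e ∈ F T, w e ≤ -(sb T)} := by
      intro ω hω
      simp only [hbad, Set.mem_setOf_eq, not_le] at hω
      rw [hWeq, ← hsbeq] at hω
      rcases lt_abs.mp hω with h | h
      · exact Or.inl h.le
      · exact Or.inr (by simp only [Set.mem_setOf_eq]; linarith)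
    have h3 : (μ (bad T)).toReal ≤
        (μ {ω | sb T ≤ (∑ e ∈ F T, Wr e ω) - ∑ e ∈ F T, w e}).toReal
        + (μ {ω | (∑ e ∈ F T, Wr e ω) - ∑ e ∈ F T, w e ≤ -(sb T)}).toReal := by
      have h1 : μ (bad T) ≤ μ {ω | sb T ≤ (∑ e ∈ F T, Wr e ω) - ∑ e ∈ F T, w e}
          + μ {ω | (∑ e ∈ F T, Wr e ω) - ∑ e ∈ F T, w e ≤ -(sb T)} :=
        le_trans (measure_mono hsub) (measure_union_le _ _)
      have hfin : μ {ω | sb T ≤ (∑ e ∈ F T, Wr e ω) - ∑ e ∈ F T, w e}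
          + μ {ω | (∑ e ∈ F T, Wr e ω) - ∑ e ∈ F T, w e ≤ -(sb T)} ≠ ⊤ :=
        ENNReal.add_ne_top.mpr ⟨measure_ne_top _ _, measure_ne_top _ _⟩
      have h2' := ENNReal.toReal_mono hfin h1
      rwa [ENNReal.toReal_add (measure_ne_top _ _) (measure_ne_top _ _)] at h2'
    have hcher := chernoff_two_sided μ (F T) Wr w τ t hτ ht0 htτ hw hmeas hindep h2
      hmean (sb T)
    rw [hWeq] at hcher
    have hconv : 2 * Real.exp (-t * sb T + t ^ 2 * (τ * W T)) ≤ 2 * x ^ T.card := by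
      have h5 : Real.exp (-t * sb T + t ^ 2 * (τ * W T))
          ≤ Real.exp (-(25 * (T.card : ℝ) * L)) := Real.exp_le_exp.mpr hexp
      have h6 : Real.exp (-(25 * (T.card : ℝ) * L)) = x ^ T.card := by
        rw [hx, ← Real.exp_nat_mul]
        congr 1; ring
      rw [← h6]; linarith
    linarith
  -- union bound
  have hGc : Gᶜ = ⋃ T : Finset V, bad T := by
    ext ω
    simp only [hG, hbad, Set.mem_compl_iff, Set.mem_setOf_eq, Set.mem_iUnion, not_forall]
  have hbadle : μ Gᶜ ≤ ∑' T : Finset V, μ (bad T) := by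
    rw [hGc]; exact measure_iUnion_le _
  rw [tsum_fintype] at hbadle
  have hbadReal : (μ Gᶜ).toReal ≤ ∑ T : Finset V, (μ (bad T)).toReal := by
    have hfin : (∑ T : Finset V, μ (bad T)) ≠ ⊤ :=
      (ENNReal.sum_lt_top.mpr fun T _ => measure_lt_top _ _).ne
    have h := ENNReal.toReal_mono hfin hbadle
    rwa [ENNReal.toReal_sum (fun T _ => measure_ne_top _ _)] at h
  classical
  have hempty : (μ (bad (∅ : Finset V))).toReal = 0 := by
    have hbe : bad (∅ : Finset V) = ∅ := by
      ext ω
      simp [hbad, hF]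
    rw [hbe]; simp
  have hsum1 : ∑ T : Finset V, (μ (bad T)).toReal ≤ 2 * ((x + 1) ^ N - 1) := by
    have e1 : ∑ T : Finset V, (μ (bad T)).toReal
        = (μ (bad ∅)).toReal
          + ∑ T ∈ (univ : Finset (Finset V)).erase ∅, (μ (bad T)).toReal :=
      (Finset.add_sum_erase _ (fun T : Finset V => (μ (bad T)).toReal) (mem_univ ∅)).symm
    have e2 : ∑ T : Finset V, 2 * x ^ T.card
        = 2 * x ^ (∅ : Finset V).card
          + ∑ T ∈ (univ : Finset (Finset V)).erase ∅, 2 * x ^ T.card :=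
      (Finset.add_sum_erase _ (fun T : Finset V => 2 * x ^ T.card) (mem_univ ∅)).symm
    have e3 : ∑ T : Finset V, 2 * x ^ T.card = 2 * ((x + 1) ^ N) := by
      rw [← Finset.mul_sum, sum_pow_card]
    have e4 : ∑ T ∈ (univ : Finset (Finset V)).erase ∅, (μ (bad T)).toReal
        ≤ ∑ T ∈ (univ : Finset (Finset V)).erase ∅, 2 * x ^ T.card :=
      Finset.sum_le_sum fun T _ => hperT T
    have e5 : 2 * x ^ (∅ : Finset V).card = 2 := by simp
    rw [e1, hempty]
    rw [e5] at e2
    linarith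
  -- numeric bound
  have hxval : x = (n ^ 25)⁻¹ := by
    rw [hx, Real.exp_neg]
    congr 1
    rw [show (25 : ℝ) * L = ((25 : ℕ) : ℝ) * L by norm_num, Real.exp_nat_mul,
      Real.exp_log hn0]
  have hnne : n ≠ 0 := hn0.ne'
  have hfinal : 2 * ((x + 1) ^ N - 1) ≤ 1 / n := by
    have hy : n * x = (n ^ 24)⁻¹ := by
      rw [hxval]
      field_simp
    have hy0 : 0 < n * x := mul_pos hn0 hx0
    have hy1 : n * x ≤ 1 := by
      rw [hy]
      apply inv_le_one_of_one_le₀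
      have h1n : (1:ℝ)^24 ≤ n ^ 24 :=
        pow_le_pow_left₀ (by norm_num) (by linarith) 24
      simpa using h1n
    have h7 : (x + 1) ^ N ≤ Real.exp (n * x) := by
      calc (x + 1) ^ N ≤ (Real.exp x) ^ N := by
            apply pow_le_pow_left₀ (by positivity)
            linarith [Real.add_one_le_exp x]
        _ = Real.exp ((N : ℝ) * x) := (Real.exp_nat_mul x N).symm
        _ = Real.exp (n * x) := by rw [hn]
    have h8 : Real.exp (n * x) ≤ 1 + 2 * (n * x) := by
      have h := exp_quad hy1
      nlinarith
    have h9 : 4 * (n * x) ≤ 1 / n := by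
      rw [hy, inv_eq_one_div, mul_one_div, div_le_div_iff₀ (by positivity) hn0]
      have h23 : (2:ℝ) ^ 23 ≤ n ^ 23 := pow_le_pow_left₀ (by norm_num) hn2 23
      have : n ^ 24 = n ^ 23 * n := by ring
      nlinarith
    linarith
  -- conclusion
  have hcover : (1:ℝ) ≤ (μ G).toReal + (μ Gᶜ).toReal := by
    have h1 : (1:ENNReal) ≤ μ G + μ Gᶜ := by
      calc (1:ENNReal) = μ Set.univ := (measure_univ (μ := μ)).symm
        _ = μ (G ∪ Gᶜ) := by rw [Set.union_compl_self]
        _ ≤ μ G + μ Gᶜ := measure_union_le _ _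
    have hfin : μ G + μ Gᶜ ≠ ⊤ :=
      ENNReal.add_ne_top.mpr ⟨measure_ne_top _ _, measure_ne_top _ _⟩
    have h := ENNReal.toReal_mono hfin h1
    rwa [ENNReal.toReal_add (measure_ne_top _ _) (measure_ne_top _ _),
      ENNReal.toReal_one] at h
  have hGcle : (μ Gᶜ).toReal ≤ 1 / n :=
    le_trans hbadReal (le_trans hsum1 hfinal)
  linarith
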